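/- arXiv:2411.13733 — 3 statements merged into one kernel-verified Lean document; each statement's English description precedes it below -/
import Mathlib

section
/- For a 1-Lipschitz function φ: ℝ → ℝ applied coordinatewise, and any two weight-matrix tuples, the composed network outputs satisfy ‖φ(W_ℓ φ(⋯φ(W_1 x))) − φ(W'_ℓ φ(⋯φ(W'_1 x)))‖ ≤ ‖A x − A' x‖ where A, A' are products of weight matrices interleaved with diagonal matrices whose entries lie in [0,1] (for ReLU). -/
open Matrix MeasureTheory ProbabilityTheory Real

/-- Frobenius norm of a real matrix. -/
noncomputable def frobNorm {a b : ℕ} (W : Matrix (Fin a) (Fin b) ℝ) : ℝ :=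
  Real.sqrt (∑ i, ∑ j, (W i j)^2)

/-- Spectral (ℓ2 operator) norm of a real matrix. -/
noncomputable def specNorm {a b : ℕ} (W : Matrix (Fin a) (Fin b) ℝ) : ℝ :=
  ‖(LinearMap.toContinuousLinearMap (Matrix.toEuclideanLin W))‖

/-- Euclidean norm of a vector. -/
noncomputable def vecNorm {a : ℕ} (v : Fin a → ℝ) : ℝ := Real.sqrt (∑ i, (v i)^2)

/-- `Γ` is a random matrix with i.i.d. standard Gaussian entries. -/
def IsStdGaussianMatrix {h m : ℕ} {Ω : Type*} [MeasurableSpace Ω] (μ : Measure Ω)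
    (Γ : Ω → Matrix (Fin h) (Fin m) ℝ) : Prop :=
  (∀ p : Fin h × Fin m, Measure.map (fun ω => Γ ω p.1 p.2) μ = gaussianReal 0 1) ∧
    iIndepFun (fun (p : Fin h × Fin m) ω => Γ ω p.1 p.2) μ

/-- The matrix product `W_L ⋯ W_1`. -/
noncomputable def chainProd : (L : ℕ) → (dims : ℕ → ℕ) →
    (W : ∀ i : Fin L, Matrix (Fin (dims (i+1))) (Fin (dims i)) ℝ) →
    Matrix (Fin (dims L)) (Fin (dims 0)) ℝ
  | 0, _, _ => 1
  | (L+1), dims, W => W (⟨L, Nat.lt_succ_self L⟩ : Fin (L+1)) *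
      chainProd L dims (fun i => W i.castSucc)

/-- Interleaved product `D_L W_L D_{L-1} W_{L-1} ⋯ D_1 W_1`. -/
noncomputable def interDW : (L : ℕ) → (dims : ℕ → ℕ) →
    (W : ∀ i : Fin L, Matrix (Fin (dims (i+1))) (Fin (dims i)) ℝ) →
    (D : ∀ i : Fin L, Matrix (Fin (dims (i+1))) (Fin (dims (i+1))) ℝ) →
    Matrix (Fin (dims L)) (Fin (dims 0)) ℝ
  | 0, _, _, _ => 1
  | (L+1), dims, W, D =>
      D (⟨L, Nat.lt_succ_self L⟩ : Fin (L+1)) * W (⟨L, Nat.lt_succ_self L⟩ : Fin (L+1)) *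
        interDW L dims (fun i => W i.castSucc) (fun i => D i.castSucc)

/-- Interleaved product `W_{L+1} D_L W_L ⋯ D_1 W_1` (no diagonal factor after the last layer). -/
noncomputable def interWD (L : ℕ) (dims : ℕ → ℕ)
    (W : ∀ i : Fin (L+1), Matrix (Fin (dims (i+1))) (Fin (dims i)) ℝ)
    (D : ∀ i : Fin L, Matrix (Fin (dims (i+1))) (Fin (dims (i+1))) ℝ) :
    Matrix (Fin (dims (L+1))) (Fin (dims 0)) ℝ :=
  W (⟨L, Nat.lt_succ_self L⟩ : Fin (L+1)) * interDW L dims (fun i => W i.castSucc) D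

/-- Coordinatewise ReLU. -/
noncomputable def reluVec {n : ℕ} (v : Fin n → ℝ) : Fin n → ℝ := fun i => max (v i) 0

/-- Depth-`L` ReLU network `x ↦ φ(W_L φ(⋯ φ(W_1 x)))`. -/
noncomputable def reluNet : (L : ℕ) → (dims : ℕ → ℕ) →
    (W : ∀ i : Fin L, Matrix (Fin (dims (i+1))) (Fin (dims i)) ℝ) →
    (x : Fin (dims 0) → ℝ) → (Fin (dims L) → ℝ)
  | 0, _, _, x => x
  | (L+1), dims, W, x =>
      reluVec ((W (⟨L, Nat.lt_succ_self L⟩ : Fin (L+1))).mulVec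
        (reluNet L dims (fun i => W i.castSucc) x))

/-- A matrix is diagonal with diagonal entries in `[0,1]`. -/
def IsBoxDiagonal {n : ℕ} (D : Matrix (Fin n) (Fin n) ℝ) : Prop :=
  ∃ g : Fin n → ℝ, (∀ k, g k ∈ Set.Icc (0:ℝ) 1) ∧ D = Matrix.diagonal g


lemma reluVec_eq_diag {n : ℕ} (v : Fin n → ℝ) :
    ∃ g : Fin n → ℝ, (∀ k, g k ∈ Set.Icc (0:ℝ) 1) ∧
      reluVec v = (Matrix.diagonal g).mulVec v := by
  refine ⟨fun k => if 0 ≤ v k then 1 else 0, ?_, ?_⟩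
  · intro k; by_cases h : 0 ≤ v k <;> simp [h]
  · funext k
    simp only [Matrix.mulVec_diagonal, reluVec]
    by_cases h : 0 ≤ v k
    · simp [h, max_eq_left h]
    · simp [h, max_eq_right (le_of_not_ge h)]

lemma reluNet_eq_interDW (L : ℕ) (dims : ℕ → ℕ)
    (W : ∀ i : Fin L, Matrix (Fin (dims (i+1))) (Fin (dims i)) ℝ)
    (x : Fin (dims 0) → ℝ) :
    ∃ D : ∀ i : Fin L, Matrix (Fin (dims (i+1))) (Fin (dims (i+1))) ℝ,
      (∀ i, IsBoxDiagonal (D i)) ∧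
      reluNet L dims W x = (interDW L dims W D).mulVec x := by
  induction L with
  | zero =>
    exact ⟨fun i => i.elim0, fun i => i.elim0, by simp [reluNet, interDW]⟩
  | succ L ih =>
    obtain ⟨Dp, hDp, hEq⟩ := ih (fun i => W i.castSucc)
    obtain ⟨g, hg, hrelu⟩ := reluVec_eq_diag
      ((W (⟨L, Nat.lt_succ_self L⟩ : Fin (L+1))).mulVec
        (reluNet L dims (fun i => W i.castSucc) x))
    refine ⟨Fin.lastCases (Matrix.diagonal g) Dp, ?_, ?_⟩
    · intro i
      induction i using Fin.lastCases with
      | last => simpa using ⟨g, hg, rfl⟩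
      | cast j => simpa using hDp j
    · show reluVec _ = _
      rw [hrelu, hEq]
      have h2 : Fin.lastCases (motive := fun i : Fin (L+1) =>
          Matrix (Fin (dims (i+1))) (Fin (dims (i+1))) ℝ)
          (Matrix.diagonal g) Dp ⟨L, Nat.lt_succ_self L⟩ = Matrix.diagonal g :=
        Fin.lastCases_last
      simp only [interDW, Fin.lastCases_castSucc, Matrix.mulVec_mulVec]
      rw [h2, Matrix.mul_assoc]

/-- for ReLU networks, the difference of outputs on an input `x` is
bounded by `‖Ax − A'x‖` where `A, A'` are products of the weight matrices interleaved
with diagonal matrices whose entries lie in `[0,1]`. -/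
theorem relu_net_diff_le_interleaved {L : ℕ} (dims : ℕ → ℕ)
    (W W' : ∀ i : Fin L, Matrix (Fin (dims (i+1))) (Fin (dims i)) ℝ)
    (x : Fin (dims 0) → ℝ) :
    ∃ D D' : ∀ i : Fin L, Matrix (Fin (dims (i+1))) (Fin (dims (i+1))) ℝ,
      (∀ i, IsBoxDiagonal (D i)) ∧ (∀ i, IsBoxDiagonal (D' i)) ∧
      vecNorm (reluNet L dims W x - reluNet L dims W' x)
        ≤ vecNorm ((interDW L dims W D).mulVec x - (interDW L dims W' D').mulVec x) := by
  obtain ⟨D, hD, hEq⟩ := reluNet_eq_interDW L dims W x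
  obtain ⟨D', hD', hEq'⟩ := reluNet_eq_interDW L dims W' x
  exact ⟨D, D', hD, hD', by rw [hEq, hEq']⟩
end

section
/- The diameter (in Frobenius norm, of the image of a data matrix X) of the class of depth-ℓ ReLU networks with layer spectral norms at most B_j and layer ranks at most r_j is at most ‖X‖_F · √(2·min_j r_j) · 2·∏_{j=1}^ℓ B_j. -/
open Matrix MeasureTheory ProbabilityTheory Real

lemma vecNorm_nonneg {a : ℕ} (v : Fin a → ℝ) : 0 ≤ vecNorm v := Real.sqrt_nonneg _

lemma vecNorm_eq {a : ℕ} (v : Fin a → ℝ) :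
    vecNorm v = ‖(WithLp.equiv 2 (Fin a → ℝ)).symm v‖ := by
  rw [vecNorm, EuclideanSpace.norm_eq]
  congr 1
  refine Finset.sum_congr rfl fun i _ => ?_
  rw [Real.norm_eq_abs, sq_abs]
  rfl

lemma vecNorm_sub_le {a : ℕ} (u w : Fin a → ℝ) :
    vecNorm (u - w) ≤ vecNorm u + vecNorm w := by
  rw [vecNorm_eq, vecNorm_eq, vecNorm_eq]
  exact norm_sub_le _ _

lemma vecNorm_mulVec_le {a b : ℕ} (W : Matrix (Fin a) (Fin b) ℝ) (v : Fin b → ℝ) :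
    vecNorm (W.mulVec v) ≤ specNorm W * vecNorm v := by
  rw [vecNorm_eq, vecNorm_eq]
  exact (LinearMap.toContinuousLinearMap (Matrix.toEuclideanLin W)).le_opNorm ((WithLp.equiv 2 (Fin b → ℝ)).symm v)

lemma vecNorm_relu_le {a : ℕ} (v : Fin a → ℝ) : vecNorm (reluVec v) ≤ vecNorm v := by
  apply Real.sqrt_le_sqrt
  apply Finset.sum_le_sum
  intro i _
  have h1 : (0:ℝ) ≤ max (v i) 0 := le_max_right _ _
  have h2 : max (v i) 0 ≤ |v i| := max_le (le_abs_self _) (abs_nonneg _)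
  calc (reluVec v i)^2 ≤ |v i|^2 := by
        exact pow_le_pow_left₀ h1 h2 2
    _ = (v i)^2 := sq_abs _

lemma vecNorm_reluNet_le : ∀ (L : ℕ) (dims : ℕ → ℕ)
    (W : ∀ i : Fin L, Matrix (Fin (dims (i+1))) (Fin (dims i)) ℝ) (B : Fin L → ℝ),
    (∀ i, specNorm (W i) ≤ B i) → ∀ x,
      vecNorm (reluNet L dims W x) ≤ (∏ i, B i) * vecNorm x
  | 0, dims, W, B, hB, x => by simp [reluNet]
  | (L+1), dims, W, B, hB, x => by
    have hBnn : ∀ i, 0 ≤ B i := fun i => le_trans (norm_nonneg _) (hB i)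
    have IH := vecNorm_reluNet_le L dims (fun i => W i.castSucc) (fun i => B i.castSucc)
      (fun i => hB i.castSucc) x
    calc vecNorm (reluNet (L+1) dims W x)
        ≤ vecNorm ((W ⟨L, Nat.lt_succ_self L⟩).mulVec
            (reluNet L dims (fun i => W i.castSucc) x)) := vecNorm_relu_le _
      _ ≤ specNorm (W ⟨L, Nat.lt_succ_self L⟩) *
            vecNorm (reluNet L dims (fun i => W i.castSucc) x) := vecNorm_mulVec_le _ _
      _ ≤ B ⟨L, Nat.lt_succ_self L⟩ * ((∏ i : Fin L, B i.castSucc) * vecNorm x) :=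
            mul_le_mul (hB _) IH (vecNorm_nonneg _) (hBnn _)
      _ = (∏ i, B i) * vecNorm x := by
            rw [Fin.prod_univ_castSucc]
            show B (Fin.last L) * ((∏ i : Fin L, B i.castSucc) * vecNorm x)
              = ((∏ i : Fin L, B i.castSucc) * B (Fin.last L)) * vecNorm x
            ring

lemma reluNet_eq_zero : ∀ (L : ℕ) (dims : ℕ → ℕ)
    (W : ∀ i : Fin L, Matrix (Fin (dims (i+1))) (Fin (dims i)) ℝ),
    (∃ k, W k = 0) → ∀ x, reluNet L dims W x = 0
  | 0, dims, W, h, x => by rcases h with ⟨k, -⟩; exact absurd k.2 (Nat.not_lt_zero _)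
  | (L+1), dims, W, h, x => by
    obtain ⟨k, hk⟩ := h
    show reluVec ((W ⟨L, Nat.lt_succ_self L⟩).mulVec
        (reluNet L dims (fun i => W i.castSucc) x)) = 0
    rcases Fin.lastCases (motive := fun k => W k = 0 → reluVec ((W ⟨L, Nat.lt_succ_self L⟩).mulVec
        (reluNet L dims (fun i => W i.castSucc) x)) = 0)
      (fun hlast => by
        have hz : W ⟨L, Nat.lt_succ_self L⟩ = 0 := hlast
        rw [hz, Matrix.zero_mulVec]
        funext i; simp [reluVec])
      (fun j hj => by
        have hz : reluNet L dims (fun i => W i.castSucc) x = 0 :=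
          reluNet_eq_zero L dims _ ⟨j, hj⟩ x
        rw [hz, Matrix.mulVec_zero]
        funext i; simp [reluVec]) k hk with h'
    exact h'

lemma matrix_eq_zero_of_rank_eq_zero {a b : ℕ} (A : Matrix (Fin a) (Fin b) ℝ)
    (h : A.rank = 0) : A = 0 := by
  rw [Matrix.rank] at h
  have hbot : LinearMap.range A.mulVecLin = ⊥ := Submodule.finrank_eq_zero.mp h
  have hz : A.mulVecLin = 0 := LinearMap.range_eq_bot.mp hbot
  ext i j
  have := congrFun (congrFun (congrArg DFunLike.coe hz) (Pi.single j 1)) i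
  simpa [Matrix.mulVecLin_apply, Matrix.mulVec_single] using this

/-- the Frobenius-norm diameter of the image of the data matrix `X` under
the class of depth-`L+1` ReLU networks with layer spectral norms `≤ B_j` and layer
ranks `≤ r_j` is at most `‖X‖_F · √(2 min_j r_j) · 2 ∏_j B_j`. -/
theorem diameter_relu_class_le {L m : ℕ} (dims : ℕ → ℕ)
    (B : Fin (L+1) → ℝ) (r : Fin (L+1) → ℕ)
    (X : Fin m → Fin (dims 0) → ℝ)
    (W W' : ∀ i : Fin (L+1), Matrix (Fin (dims (i+1))) (Fin (dims i)) ℝ)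
    (hW : ∀ i, specNorm (W i) ≤ B i) (hr : ∀ i, (W i).rank ≤ r i)
    (hW' : ∀ i, specNorm (W' i) ≤ B i) (hr' : ∀ i, (W' i).rank ≤ r i) :
    ∀ k : Fin (L+1),
      Real.sqrt (∑ i, (vecNorm (reluNet (L+1) dims W (X i) - reluNet (L+1) dims W' (X i)))^2)
        ≤ frobNorm (Matrix.of X) * Real.sqrt (2 * r k) * (2 * ∏ j, B j) := by
  intro k
  have hBnn : ∀ i, 0 ≤ B i := fun i => le_trans (norm_nonneg _) (hW i)
  have hPnn : (0:ℝ) ≤ ∏ j, B j := Finset.prod_nonneg fun j _ => hBnn j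
  have hfrob : frobNorm (Matrix.of X) = Real.sqrt (∑ i, (vecNorm (X i))^2) := by
    rw [frobNorm]
    congr 1
    refine Finset.sum_congr rfl fun i _ => ?_
    rw [vecNorm, Real.sq_sqrt (Finset.sum_nonneg fun j _ => sq_nonneg _)]
    rfl
  rcases Nat.eq_zero_or_pos (r k) with h0 | hpos
  · have hrk : (W k).rank = 0 := Nat.le_zero.mp (h0 ▸ hr k)
    have hrk' : (W' k).rank = 0 := Nat.le_zero.mp (h0 ▸ hr' k)
    have hz : ∀ i : Fin m, reluNet (L+1) dims W (X i) - reluNet (L+1) dims W' (X i) = 0 := by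
      intro i
      rw [reluNet_eq_zero (L+1) dims W ⟨k, matrix_eq_zero_of_rank_eq_zero _ hrk⟩,
        reluNet_eq_zero (L+1) dims W' ⟨k, matrix_eq_zero_of_rank_eq_zero _ hrk'⟩, sub_zero]
    have hL : Real.sqrt (∑ i, (vecNorm (reluNet (L+1) dims W (X i)
        - reluNet (L+1) dims W' (X i)))^2) = 0 := by
      have : ∀ i ∈ Finset.univ, (vecNorm (reluNet (L+1) dims W (X i)
          - reluNet (L+1) dims W' (X i)))^2 = 0 := by
        intro i _
        rw [hz i]
        simp [vecNorm]
      rw [Finset.sum_congr rfl this]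
      simp
    rw [hL]
    have h2 : (0:ℝ) ≤ 2 * ∏ j, B j := by linarith
    exact mul_nonneg (mul_nonneg (Real.sqrt_nonneg _) (Real.sqrt_nonneg _)) h2
  · have hkey : ∀ i : Fin m, vecNorm (reluNet (L+1) dims W (X i)
        - reluNet (L+1) dims W' (X i)) ≤ (2 * ∏ j, B j) * vecNorm (X i) := by
      intro i
      calc vecNorm (reluNet (L+1) dims W (X i) - reluNet (L+1) dims W' (X i))
          ≤ vecNorm (reluNet (L+1) dims W (X i)) + vecNorm (reluNet (L+1) dims W' (X i)) :=
            vecNorm_sub_le _ _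
        _ ≤ (∏ j, B j) * vecNorm (X i) + (∏ j, B j) * vecNorm (X i) :=
            add_le_add (vecNorm_reluNet_le (L+1) dims W B hW (X i))
              (vecNorm_reluNet_le (L+1) dims W' B hW' (X i))
        _ = (2 * ∏ j, B j) * vecNorm (X i) := by ring
    have step1 : Real.sqrt (∑ i, (vecNorm (reluNet (L+1) dims W (X i)
        - reluNet (L+1) dims W' (X i)))^2)
        ≤ Real.sqrt (∑ i, ((2 * ∏ j, B j) * vecNorm (X i))^2) := by
      apply Real.sqrt_le_sqrt
      apply Finset.sum_le_sum
      intro i _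
      exact pow_le_pow_left₀ (vecNorm_nonneg _) (hkey i) 2
    have h2nn : (0:ℝ) ≤ 2 * ∏ j, B j := by linarith
    have step2 : Real.sqrt (∑ i, ((2 * ∏ j, B j) * vecNorm (X i))^2)
        = (2 * ∏ j, B j) * Real.sqrt (∑ i, (vecNorm (X i))^2) := by
      have : ∑ i, ((2 * ∏ j, B j) * vecNorm (X i))^2
          = (2 * ∏ j, B j)^2 * ∑ i, (vecNorm (X i))^2 := by
        rw [Finset.mul_sum]
        refine Finset.sum_congr rfl fun i _ => by ring
      rw [this, Real.sqrt_mul (sq_nonneg _), Real.sqrt_sq h2nn]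
    have hone : (1:ℝ) ≤ Real.sqrt (2 * r k) := by
      rw [show (1:ℝ) = Real.sqrt 1 from (Real.sqrt_one).symm]
      apply Real.sqrt_le_sqrt
      have : (1:ℝ) ≤ (r k : ℝ) := by exact_mod_cast hpos
      linarith
    calc Real.sqrt (∑ i, (vecNorm (reluNet (L+1) dims W (X i)
        - reluNet (L+1) dims W' (X i)))^2)
        ≤ (2 * ∏ j, B j) * Real.sqrt (∑ i, (vecNorm (X i))^2) := step2 ▸ step1
      _ = frobNorm (Matrix.of X) * 1 * (2 * ∏ j, B j) := by rw [hfrob]; ring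
      _ ≤ frobNorm (Matrix.of X) * Real.sqrt (2 * r k) * (2 * ∏ j, B j) := by
          apply mul_le_mul_of_nonneg_right _ h2nn
          apply mul_le_mul_of_nonneg_left hone
          rw [hfrob]
          exact Real.sqrt_nonneg _
end

section
/- Talagrand contraction for Gaussian complexity: if φ: ℝ → ℝ is L-Lipschitz, then for any finite function class H on sample x_1,…,x_m, E_γ sup_{h∈H} ∑ᵢ γᵢ φ(h(xᵢ)) ≤ L · E_γ sup_{h∈H} ∑ᵢ γᵢ h(xᵢ), where γᵢ are i.i.d. standard Gaussians, provided 0 ∈ {(h(x₁),…,h(x_m)) : h ∈ H} or H is symmetric (so both suprema are nonnegative). -/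
open Matrix MeasureTheory ProbabilityTheory Real

namespace TalHelper

local notation "μg" => gaussianReal 0 1

lemma map_neg_gauss : Measure.map (fun x : ℝ => -x) μg = μg := by
  have h := gaussianReal_map_const_mul (μ := 0) (v := 1) (-1)
  simp only [neg_one_mul, mul_zero] at h
  convert h using 2
  norm_num

lemma integrable_id_gauss : Integrable (fun x : ℝ => x) μg := by
  rw [gaussianReal_of_var_ne_zero _ one_ne_zero]
  rw [integrable_withDensity_iff (measurable_gaussianPDF _ _)
    (ae_of_all _ fun x => ENNReal.ofReal_lt_top)]
  have h : Integrable (fun x : ℝ => x * Real.exp (-(1/2) * x^2)) :=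
    integrable_mul_exp_neg_mul_sq (by norm_num)
  refine (h.const_mul ((Real.sqrt (2 * π))⁻¹)).congr (ae_of_all _ fun x => ?_)
  rw [gaussianPDF_def]
  simp only [gaussianPDFReal]
  push_cast
  rw [ENNReal.toReal_ofReal (by positivity)]
  ring_nf

lemma map_eval_pi {m : ℕ} (i : Fin m) :
    Measure.map (fun γ : Fin m → ℝ => γ i) (Measure.pi fun _ : Fin m => μg) = μg := by
  refine Measure.ext fun s hs => ?_
  rw [Measure.map_apply (measurable_pi_apply i) hs]
  have hpre : (fun γ : Fin m → ℝ => γ i) ⁻¹' s =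
      Set.pi Set.univ (Function.update (fun _ : Fin m => (Set.univ : Set ℝ)) i s) := by
    ext γ
    simp only [Set.mem_preimage, Set.mem_univ_pi, Function.update]
    constructor
    · intro h j
      by_cases hj : j = i
      · subst hj; simp [h]
      · simp [hj]
    · intro h
      have := h i
      simpa using this
  rw [hpre, Measure.pi_pi]
  rw [Finset.prod_eq_single i]
  · simp
  · intro j _ hj
    simp [Function.update, hj]
  · simp

lemma integrable_eval_pi {m : ℕ} (i : Fin m) :
    Integrable (fun γ : Fin m → ℝ => γ i) (Measure.pi fun _ : Fin m => μg) := by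
  have h : Integrable (fun x : ℝ => x) (Measure.map (fun γ : Fin m → ℝ => γ i)
      (Measure.pi fun _ : Fin m => μg)) := by rw [map_eval_pi]; exact integrable_id_gauss
  exact ((integrable_map_measure aestronglyMeasurable_id
    (measurable_pi_apply i).aemeasurable).mp h)

variable {ι : Type*}

lemma continuous_sup' {X : Type*} [TopologicalSpace X] (s : Finset ι) (hs : s.Nonempty)
    (f : ι → X → ℝ) (hf : ∀ i, Continuous (f i)) :
    Continuous (fun x => s.sup' hs (fun i => f i x)) := by
  induction hs using Finset.Nonempty.cons_induction with
  | singleton i => simp only [Finset.sup'_singleton]; exact hf i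
  | cons i s hi hs ih =>
      simp only [Finset.sup'_cons hs]
      exact (hf i).max ih

lemma abs_sup'_le (s : Finset ι) (hs : s.Nonempty) (f : ι → ℝ) :
    |s.sup' hs f| ≤ ∑ i ∈ s, |f i| := by
  rw [abs_le]
  constructor
  · obtain ⟨i, hi⟩ := hs
    refine le_trans ?_ (Finset.le_sup' f hi)
    refine le_trans (neg_le_neg (Finset.single_le_sum (fun j _ => abs_nonneg (f j)) hi)) ?_
    exact neg_abs_le _
  · exact Finset.sup'_le hs f fun i hi =>
      (le_abs_self _).trans (Finset.single_le_sum (fun j _ => abs_nonneg (f j)) hi)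

lemma integrable_sup_one (s : Finset ι) (hs : s.Nonempty) (a c : ι → ℝ) :
    Integrable (fun t => s.sup' hs (fun h => t * a h + c h)) μg := by
  have hcont : Continuous (fun t : ℝ => s.sup' hs (fun h => t * a h + c h)) :=
    continuous_sup' s hs _ fun h => by continuity
  refine Integrable.mono' (g := fun t => ∑ h ∈ s, (|a h| * |t| + |c h|))
    ?_ hcont.aestronglyMeasurable (ae_of_all _ fun t => ?_)
  · exact integrable_finset_sum _ fun h _ =>
      (integrable_id_gauss.abs.const_mul _).add (integrable_const _)
  · rw [Real.norm_eq_abs]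
    refine (abs_sup'_le s hs _).trans (Finset.sum_le_sum fun h _ => ?_)
    calc |t * a h + c h| ≤ |t * a h| + |c h| := abs_add_le _ _
      _ = |a h| * |t| + |c h| := by rw [abs_mul, mul_comm]

lemma integrable_sup_pi {m : ℕ} (s : Finset ι) (hs : s.Nonempty) (a : ι → Fin m → ℝ) :
    Integrable (fun γ : Fin m → ℝ => s.sup' hs (fun v => ∑ i, γ i * a v i))
      (Measure.pi fun _ : Fin m => μg) := by
  have hcont : Continuous (fun γ : Fin m → ℝ => s.sup' hs (fun v => ∑ i, γ i * a v i)) :=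
    continuous_sup' s hs _ fun v => by continuity
  refine Integrable.mono' (g := fun γ => ∑ v ∈ s, ∑ i, |a v i| * |γ i|)
    ?_ hcont.aestronglyMeasurable (ae_of_all _ fun γ => ?_)
  · exact integrable_finset_sum _ fun v _ => integrable_finset_sum _ fun i _ =>
      (integrable_eval_pi i).abs.const_mul _
  · rw [Real.norm_eq_abs]
    refine (abs_sup'_le s hs _).trans (Finset.sum_le_sum fun v _ => ?_)
    refine (Finset.abs_sum_le_sum_abs _ _).trans (Finset.sum_le_sum fun i _ => ?_)
    rw [abs_mul, mul_comm]


lemma sup_step (s : Finset ι) (hs : s.Nonempty) (φ : ℝ → ℝ) (L : ℝ)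
    (hLip : ∀ a b : ℝ, |φ a - φ b| ≤ L * |a - b|) (f c : ι → ℝ) {γ : ℝ} (hγ : 0 ≤ γ) :
    s.sup' hs (fun h => γ * φ (f h) + c h) + s.sup' hs (fun h => -γ * φ (f h) + c h)
      ≤ s.sup' hs (fun h => γ * (L * f h) + c h)
        + s.sup' hs (fun h => -γ * (L * f h) + c h) := by
  obtain ⟨h₁, hm₁, he₁⟩ := Finset.exists_mem_eq_sup' hs (fun h => γ * φ (f h) + c h)
  obtain ⟨h₂, hm₂, he₂⟩ := Finset.exists_mem_eq_sup' hs (fun h => -γ * φ (f h) + c h)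
  rw [he₁, he₂]
  have hlip' : γ * (φ (f h₁) - φ (f h₂)) ≤ γ * (L * |f h₁ - f h₂|) := by
    refine mul_le_mul_of_nonneg_left ((le_abs_self _).trans (hLip _ _)) hγ
  rcases le_total (f h₂) (f h₁) with hle | hle
  · have habs : |f h₁ - f h₂| = f h₁ - f h₂ := abs_of_nonneg (by linarith)
    have b₁ := Finset.le_sup' (fun h => γ * (L * f h) + c h) hm₁
    have b₂ := Finset.le_sup' (fun h => -γ * (L * f h) + c h) hm₂
    rw [habs] at hlip'
    nlinarith [hlip']
  · have habs : |f h₁ - f h₂| = f h₂ - f h₁ := by rw [abs_sub_comm]; exact abs_of_nonneg (by linarith)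
    have b₁ := Finset.le_sup' (fun h => γ * (L * f h) + c h) hm₂
    have b₂ := Finset.le_sup' (fun h => -γ * (L * f h) + c h) hm₁
    rw [habs] at hlip'
    nlinarith [hlip']

lemma onedim (s : Finset ι) (hs : s.Nonempty) (φ : ℝ → ℝ) (L : ℝ)
    (hLip : ∀ a b : ℝ, |φ a - φ b| ≤ L * |a - b|) (f c : ι → ℝ) :
    ∫ t, s.sup' hs (fun h => t * φ (f h) + c h) ∂μg
      ≤ ∫ t, s.sup' hs (fun h => t * (L * f h) + c h) ∂μg := by
  set A : ℝ → ℝ := fun t => s.sup' hs (fun h => t * φ (f h) + c h) with hA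
  set B : ℝ → ℝ := fun t => s.sup' hs (fun h => t * (L * f h) + c h) with hB
  have intA : Integrable A μg := integrable_sup_one s hs _ c
  have intB : Integrable B μg := integrable_sup_one s hs _ c
  have negint : ∀ (F : ℝ → ℝ), Integrable F μg →
      (Integrable (fun t => F (-t)) μg ∧ ∫ t, F (-t) ∂μg = ∫ t, F t ∂μg) := by
    intro F hF
    have h1 : Integrable F (Measure.map (fun x : ℝ => -x) μg) := by rw [map_neg_gauss]; exact hF
    have hmeas : AEStronglyMeasurable F (Measure.map (fun x : ℝ => -x) μg) := by
      rw [map_neg_gauss]; exact hF.aestronglyMeasurable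
    constructor
    · exact (integrable_map_measure hmeas measurable_neg.aemeasurable).mp h1
    · have e1 : ∫ t, F t ∂μg = ∫ x, F (-x) ∂μg := by
        conv_lhs => rw [← map_neg_gauss]
        exact integral_map measurable_neg.aemeasurable hmeas
      exact e1.symm
  obtain ⟨intAn, hAn⟩ := negint A intA
  obtain ⟨intBn, hBn⟩ := negint B intB
  have key : ∀ t : ℝ, A t + A (-t) ≤ B t + B (-t) := by
    intro t
    rcases le_total 0 t with ht | ht
    · have := sup_step s hs φ L hLip f c ht
      simp only [neg_mul] at this ⊢
      simp only [hA, hB]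
      convert this using 3 <;> ring_nf
    · have := sup_step s hs φ L hLip f c (neg_nonneg.mpr ht)
      simp only [neg_neg] at this
      simp only [hA, hB, neg_mul] at this ⊢
      linarith [this]
  have hsum : ∫ t, (A t + A (-t)) ∂μg ≤ ∫ t, (B t + B (-t)) ∂μg :=
    integral_mono (intA.add intAn) (intB.add intBn) key
  rw [integral_add intA intAn, integral_add intB intBn, hAn, hBn] at hsum
  linarith


lemma sup'_const_mul (s : Finset ι) (hs : s.Nonempty) (g : ι → ℝ) {L : ℝ} (hL : 0 ≤ L) :
    s.sup' hs (fun i => L * g i) = L * s.sup' hs g := by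
  obtain ⟨i₀, hi₀, he⟩ := Finset.exists_mem_eq_sup' hs g
  refine le_antisymm (Finset.sup'_le hs _ fun i hi => ?_) ?_
  · exact mul_le_mul_of_nonneg_left (Finset.le_sup' g hi) hL
  · rw [he]
    exact Finset.le_sup' (fun i => L * g i) hi₀

lemma step_pi {m : ℕ} (s : Finset ι) (hs : s.Nonempty) (φ : ℝ → ℝ) (L : ℝ)
    (hLip : ∀ a b : ℝ, |φ a - φ b| ≤ L * |a - b|) (k : Fin (m+1))
    (a : ι → Fin (m+1) → ℝ) (g : ι → ℝ) :
    ∫ γ : Fin (m+1) → ℝ,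
        s.sup' hs (fun v => ∑ i, γ i * (if i = k then φ (g v) else a v i))
        ∂(Measure.pi fun _ : Fin (m+1) => μg)
      ≤ ∫ γ : Fin (m+1) → ℝ,
        s.sup' hs (fun v => ∑ i, γ i * (if i = k then L * g v else a v i))
        ∂(Measure.pi fun _ : Fin (m+1) => μg) := by
  set mP := (Measure.pi fun _ : Fin (m+1) => μg) with hmP
  set ν := (Measure.pi fun _ : Fin m => μg) with hν
  set e := MeasurableEquiv.piFinSuccAbove (fun _ : Fin (m+1) => ℝ) k with he
  have MP := measurePreserving_piFinSuccAbove (fun _ : Fin (m+1) => μg) k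
  set Fb : (Fin (m+1) → ℝ) → ℝ :=
    fun γ => s.sup' hs (fun v => ∑ i, γ i * (if i = k then φ (g v) else a v i)) with hFb
  set Fc : (Fin (m+1) → ℝ) → ℝ :=
    fun γ => s.sup' hs (fun v => ∑ i, γ i * (if i = k then L * g v else a v i)) with hFc
  have intFb : Integrable Fb mP := integrable_sup_pi s hs _
  have intFc : Integrable Fc mP := integrable_sup_pi s hs _
  have esymm : ∀ (t : ℝ) (ω : Fin m → ℝ), e.symm (t, ω) = k.insertNth t ω := by
    intro t ω
    rfl
  have keyb : ∀ (t : ℝ) (ω : Fin m → ℝ), Fb (e.symm (t, ω)) =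
      s.sup' hs (fun v => t * φ (g v) + ∑ j, ω j * a v (k.succAbove j)) := by
    intro t ω
    rw [esymm]
    refine Finset.sup'_congr hs rfl fun v _ => ?_
    rw [Fin.sum_univ_succAbove _ k]
    simp [Fin.insertNth_apply_same, Fin.insertNth_apply_succAbove, Fin.succAbove_ne]
  have keyc : ∀ (t : ℝ) (ω : Fin m → ℝ), Fc (e.symm (t, ω)) =
      s.sup' hs (fun v => t * (L * g v) + ∑ j, ω j * a v (k.succAbove j)) := by
    intro t ω
    rw [esymm]
    refine Finset.sup'_congr hs rfl fun v _ => ?_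
    rw [Fin.sum_univ_succAbove _ k]
    simp [Fin.insertNth_apply_same, Fin.insertNth_apply_succAbove, Fin.succAbove_ne]
  have compint : ∀ (F : (Fin (m+1) → ℝ) → ℝ), Integrable F mP →
      Integrable (fun z : ℝ × (Fin m → ℝ) => F (e.symm z)) (Measure.prod μg ν) := by
    intro F hF
    refine (MP.integrable_comp_emb e.measurableEmbedding).mp ?_
    have : ((fun z : ℝ × (Fin m → ℝ) => F (e.symm z)) ∘ e) = F := by
      funext γ; simp
    rw [this]
    exact hF
  have compeq : ∀ (F : (Fin (m+1) → ℝ) → ℝ),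
      ∫ γ, F γ ∂mP = ∫ z : ℝ × (Fin m → ℝ), F (e.symm z) ∂(Measure.prod μg ν) := by
    intro F
    have := MP.integral_comp e.measurableEmbedding (fun z => F (e.symm z))
    simp only [he, MeasurableEquiv.symm_apply_apply] at this
    rw [hmP, hν]
    exact this
  have intGb := compint Fb intFb
  have intGc := compint Fc intFc
  rw [compeq Fb, compeq Fc]
  rw [integral_prod_symm _ intGb, integral_prod_symm _ intGc]
  refine integral_mono intGb.integral_prod_right intGc.integral_prod_right fun ω => ?_
  simp only [keyb, keyc]
  exact onedim s hs φ L hLip g (fun v => ∑ j, ω j * a v (k.succAbove j))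

lemma main_ind {m : ℕ} (H : Finset (Fin m → ℝ)) (hH : H.Nonempty) (φ : ℝ → ℝ) (L : ℝ)
    (hLip : ∀ a b : ℝ, |φ a - φ b| ≤ L * |a - b|) (S : Finset (Fin m)) :
    ∫ γ : Fin m → ℝ, H.sup' hH (fun v => ∑ i, γ i * (if i ∈ S then φ (v i) else L * v i))
        ∂(Measure.pi fun _ : Fin m => μg)
      ≤ ∫ γ : Fin m → ℝ, H.sup' hH (fun v => ∑ i, γ i * (L * v i))
        ∂(Measure.pi fun _ : Fin m => μg) := by
  classical
  induction S using Finset.induction_on with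
  | empty => simp
  | @insert k S' hk ih =>
      refine le_trans ?_ ih
      cases m with
      | zero => exact k.elim0
      | succ m' =>
        have h1 : ∀ (γ : Fin (m'+1) → ℝ),
            H.sup' hH (fun v => ∑ i, γ i * (if i ∈ insert k S' then φ (v i) else L * v i))
            = H.sup' hH (fun v => ∑ i, γ i *
                (if i = k then φ (v k) else if i ∈ S' then φ (v i) else L * v i)) := by
          intro γ
          refine Finset.sup'_congr hH rfl fun v _ => Finset.sum_congr rfl fun i _ => ?_
          by_cases hik : i = k
          · subst hik; simp
          · simp [hik, Finset.mem_insert]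
        have h2 : ∀ (γ : Fin (m'+1) → ℝ),
            H.sup' hH (fun v => ∑ i, γ i * (if i ∈ S' then φ (v i) else L * v i))
            = H.sup' hH (fun v => ∑ i, γ i *
                (if i = k then L * v k else if i ∈ S' then φ (v i) else L * v i)) := by
          intro γ
          refine Finset.sup'_congr hH rfl fun v _ => Finset.sum_congr rfl fun i _ => ?_
          by_cases hik : i = k
          · subst hik; simp [hk]
          · simp [hik]
        simp only [h1, h2]
        exact step_pi H hH φ L hLip k
          (fun v i => if i ∈ S' then φ (v i) else L * v i) (fun v => v k)

end TalHelper

/-- Talagrand contraction for Gaussian complexity: if `φ` is `L`-Lipschitz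
with `φ(0)=0`, and the (finite) class contains `0` or is symmetric, then
`E_γ sup_h ∑ γ_i φ(h(x_i)) ≤ L · E_γ sup_h ∑ γ_i h(x_i)`. -/


theorem talagrand_contraction_gaussian {m : ℕ} (H : Finset (Fin m → ℝ)) (hH : H.Nonempty)
    (φ : ℝ → ℝ) (L : ℝ) (hLip : ∀ s t : ℝ, |φ s - φ t| ≤ L * |s - t|) (hφ0 : φ 0 = 0)
    (hsym : (0 : Fin m → ℝ) ∈ H ∨ ∀ v ∈ H, -v ∈ H) :
    ∫ γ : Fin m → ℝ, H.sup' hH (fun v => ∑ i, γ i * φ (v i))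
        ∂(Measure.pi fun _ : Fin m => gaussianReal 0 1)
      ≤ L * ∫ γ : Fin m → ℝ, H.sup' hH (fun v => ∑ i, γ i * v i)
        ∂(Measure.pi fun _ : Fin m => gaussianReal 0 1) := by
  classical
  have hL0 : 0 ≤ L := by
    have h := hLip 1 0
    rw [hφ0, sub_zero, sub_zero, abs_one, mul_one] at h
    exact le_trans (abs_nonneg _) h
  have main := TalHelper.main_ind H hH φ L hLip Finset.univ
  have e1 : ∀ γ : Fin m → ℝ, H.sup' hH (fun v => ∑ i, γ i * φ (v i))
      = H.sup' hH (fun v => ∑ i, γ i *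
          (if i ∈ (Finset.univ : Finset (Fin m)) then φ (v i) else L * v i)) := by
    intro γ; simp
  have e2 : ∀ γ : Fin m → ℝ, H.sup' hH (fun v => ∑ i, γ i * (L * v i))
      = L * H.sup' hH (fun v => ∑ i, γ i * v i) := by
    intro γ
    rw [← TalHelper.sup'_const_mul H hH _ hL0]
    refine Finset.sup'_congr hH rfl fun v _ => ?_
    rw [Finset.mul_sum]
    exact Finset.sum_congr rfl fun i _ => by ring
  refine le_trans (le_of_eq (integral_congr_ae (ae_of_all _ e1)))
    (le_trans main (le_of_eq ?_))
  rw [integral_congr_ae (ae_of_all _ e2), integral_const_mul]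
end
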